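/- Let Ω ⊆ ℂ be a measurable set with finite Lebesgue measure |Ω|. Then for every natural number n and every a ∈ ℂ, (πⁿ/n!) ∫_Ω |z − a|^{2n} e^{−π|z−a|²} dA(z) ≤ 1 − e^{−|Ω|}. (Equivalently, ∫_Ω |T_a(e_n)(z)|² dλ(z) ≤ 1 − e^{−|Ω|}, where e_n(z) = √(πⁿ/n!) zⁿ is the n-th normalized monomial and T_a is the Fock-space translation.) -/

import Mathlib

open MeasureTheory Real Finset

noncomputable def Gm (n : ℕ) (u : ℝ) : ℝ := u ^ n * Real.exp (-u) / n.factorial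

lemma Gm_cont (n : ℕ) : Continuous (Gm n) := by
  unfold Gm; fun_prop

lemma Gm_nonneg (n : ℕ) {u : ℝ} (hu : 0 ≤ u) : 0 ≤ Gm n u := by
  unfold Gm; positivity

lemma Gm_le_one (n : ℕ) {u : ℝ} (hu : 0 ≤ u) : Gm n u ≤ 1 := by
  have h1 : u ^ n / n.factorial ≤ Real.exp u := by
    calc u ^ n / n.factorial ≤ ∑ i ∈ range (n+1), u ^ i / i.factorial := by
          refine Finset.single_le_sum (f := fun i => u ^ i / (i.factorial : ℝ)) ?_ (self_mem_range_succ n)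
          intro i _; positivity
      _ ≤ Real.exp u := Real.sum_le_exp_of_nonneg hu _
  have h2 : (0:ℝ) < Real.exp (-u) := Real.exp_pos _
  have h3 : u ^ n * Real.exp (-u) / n.factorial = (u ^ n / n.factorial) * Real.exp (-u) := by ring
  rw [Gm, h3]
  calc (u ^ n / n.factorial) * Real.exp (-u) ≤ Real.exp u * Real.exp (-u) :=
        mul_le_mul_of_nonneg_right h1 h2.le
    _ = 1 := by rw [← Real.exp_add]; simp

lemma Gm_mono_incr (n : ℕ) {u v : ℝ} (hu : 0 ≤ u) (huv : u ≤ v) (hv : v ≤ n) :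
    Gm n u ≤ Gm n v := by
  have hfac : (0:ℝ) < n.factorial := by positivity
  unfold Gm
  have key : u ^ n * Real.exp (-u) ≤ v ^ n * Real.exp (-v) := by
    rcases eq_or_lt_of_le hu with h0 | h0
    · rcases eq_or_lt_of_le (h0 ▸ huv) with h1 | h1
      · rw [← h0, ← h1]
      · have hn : n ≠ 0 := by
          rintro rfl
          exact absurd hv (by push_cast; linarith)
        rw [← h0, zero_pow hn, zero_mul]
        positivity
    · have hnpos : (0:ℝ) < n := lt_of_lt_of_le h0 (huv.trans hv)
      set y : ℝ := (v - u) / n with hy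
      have hy0 : 0 ≤ y := div_nonneg (by linarith) hnpos.le
      have hy1 : (0:ℝ) < 1 - y := by
        rw [hy, sub_pos, div_lt_one hnpos]; linarith
      have h1 : Real.exp y * (1 - y) ≤ 1 := by
        have h2 : Real.exp y * Real.exp (-y) = 1 := by rw [← Real.exp_add]; simp
        nlinarith [Real.add_one_le_exp (-y), Real.exp_pos y]
      have h3 : u ≤ v * (1 - y) := by
        have : v * (1 - y) - u = (v - u) * ((n:ℝ) - v) / n := by
          rw [hy]; field_simp; ring
        nlinarith [div_nonneg (mul_nonneg (by linarith : (0:ℝ) ≤ v - u)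
          (by linarith : (0:ℝ) ≤ (n:ℝ) - v)) hnpos.le]
      have h4 : Real.exp y * u ≤ v := by
        nlinarith [Real.exp_pos y, mul_le_mul_of_nonneg_left h3 (Real.exp_pos y).le]
      have h5 : Real.exp (v - u) = (Real.exp y) ^ n := by
        rw [← Real.exp_nat_mul, hy]; field_simp
      have h6 : u ^ n * Real.exp (v - u) ≤ v ^ n := by
        rw [h5, ← mul_pow]
        exact pow_le_pow_left₀ (by positivity) (by nlinarith [Real.exp_pos y]) n
      -- note: mul_pow needs (exp y * u)^n = exp y ^ n * u^n, so rewrite order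
      have h7 : Real.exp (-u) = Real.exp (v - u) * Real.exp (-v) := by
        rw [← Real.exp_add]; ring_nf
      rw [h7, ← mul_assoc]
      exact mul_le_mul_of_nonneg_right h6 (Real.exp_pos _).le
  gcongr

lemma Gm_mono_decr (n : ℕ) {u v : ℝ} (hn : (n:ℝ) ≤ u) (huv : u ≤ v) :
    Gm n v ≤ Gm n u := by
  have hfac : (0:ℝ) < n.factorial := by positivity
  unfold Gm
  have key : v ^ n * Real.exp (-v) ≤ u ^ n * Real.exp (-u) := by
    rcases Nat.eq_zero_or_pos n with h0 | h0
    · subst h0; simpa using Real.exp_le_exp.2 (by linarith)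
    · have hu0 : (0:ℝ) < u := lt_of_lt_of_le (by exact_mod_cast h0) hn
      set y : ℝ := (v - u) / u with hy
      have hy0 : 0 ≤ y := div_nonneg (by linarith) hu0.le
      have h1 : v ≤ Real.exp y * u := by
        have h := Real.add_one_le_exp y
        have : (y + 1) * u = v := by rw [hy]; field_simp; ring
        nlinarith
      have h2 : v ^ n ≤ (Real.exp y * u) ^ n :=
        pow_le_pow_left₀ (by linarith [hu0, hy0, Real.exp_pos y] : (0:ℝ) ≤ v) h1 n
      have h3 : (Real.exp y * u) ^ n = Real.exp ((n:ℝ) * y) * u ^ n := by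
        rw [mul_pow, ← Real.exp_nat_mul]
      have h4 : Real.exp ((n:ℝ) * y) ≤ Real.exp (v - u) := by
        apply Real.exp_le_exp.2
        rw [hy]
        calc (n:ℝ) * ((v - u) / u) = ((n:ℝ) / u) * (v - u) := by ring
          _ ≤ 1 * (v - u) := mul_le_mul_of_nonneg_right ((div_le_one hu0).2 hn) (by linarith)
          _ = v - u := one_mul _
      have h5 : v ^ n ≤ Real.exp (v - u) * u ^ n := by
        calc v ^ n ≤ (Real.exp y * u) ^ n := h2
          _ = Real.exp ((n:ℝ) * y) * u ^ n := h3
          _ ≤ Real.exp (v - u) * u ^ n := by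
              exact mul_le_mul_of_nonneg_right h4 (by positivity)
      have h6 : Real.exp (-v) * Real.exp (v - u) = Real.exp (-u) := by
        rw [← Real.exp_add]; ring_nf
      calc v ^ n * Real.exp (-v) ≤ (Real.exp (v - u) * u ^ n) * Real.exp (-v) := by
            exact mul_le_mul_of_nonneg_right h5 (Real.exp_pos _).le
        _ = u ^ n * (Real.exp (-v) * Real.exp (v - u)) := by ring
        _ = u ^ n * Real.exp (-u) := by rw [h6]
  gcongr

noncomputable def Pm (n : ℕ) (x : ℝ) : ℝ := ∑ k ∈ range (n+1), x ^ k / k.factorial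

lemma Pm_hasDeriv (n : ℕ) (u : ℝ) :
    HasDerivAt (fun u => -(Real.exp (-u) * Pm n u)) (Gm n u) u := by
  induction n with
  | zero =>
      have h : HasDerivAt (fun u : ℝ => -(Real.exp (-u) * Pm 0 u)) (Real.exp (-u)) u := by
        simp only [Pm, range_one, sum_singleton, pow_zero, Nat.factorial_zero, Nat.cast_one,
          div_one, mul_one]
        have h0 : HasDerivAt (fun u : ℝ => -Real.exp (-u)) (Real.exp (-u)) u :=
          ((Real.hasDerivAt_exp (-u)).comp u (hasDerivAt_neg u)).neg.congr_deriv (by simp)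
        simpa [Pm] using h0
      simpa [Gm] using h
  | succ m ih =>
      have hterm : HasDerivAt (fun u : ℝ => -(Real.exp (-u) * (u ^ (m+1) / (m+1).factorial)))
          (Real.exp (-u) * (u ^ (m+1) / (m+1).factorial)
            - Real.exp (-u) * ((m+1) * u ^ m / (m+1).factorial)) u := by
        have he : HasDerivAt (fun u : ℝ => Real.exp (-u)) (-Real.exp (-u)) u := by
          exact ((Real.hasDerivAt_exp (-u)).comp u (hasDerivAt_neg u)).congr_deriv (by simp)
        have hp : HasDerivAt (fun u : ℝ => u ^ (m+1) / (m+1).factorial)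
            ((m+1) * u ^ m / (m+1).factorial) u := by
          simpa [div_eq_mul_inv, mul_comm, mul_assoc, mul_left_comm] using
            (hasDerivAt_pow (m+1) u).div_const ((m+1).factorial : ℝ)
        have := (he.mul hp).neg
        refine this.congr_deriv ?_
        push_cast
        ring
      have hsplit : (fun u : ℝ => -(Real.exp (-u) * Pm (m+1) u))
          = fun u => -(Real.exp (-u) * Pm m u) + -(Real.exp (-u) * (u ^ (m+1) / (m+1).factorial)) := by
        funext x
        simp only [Pm, sum_range_succ]
        ring
      rw [hsplit]
      have := ih.add hterm
      refine this.congr_deriv ?_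
      simp only [Gm]
      rw [Nat.factorial_succ]
      push_cast
      have hm : ((m+1 : ℕ) : ℝ) ≠ 0 := by positivity
      field_simp
      ring

lemma Gm_integral (n : ℕ) (α β : ℝ) :
    ∫ u in α..β, Gm n u
      = Real.exp (-α) * Pm n α - Real.exp (-β) * Pm n β := by
  have h := intervalIntegral.integral_eq_sub_of_hasDerivAt
    (f := fun u => -(Real.exp (-u) * Pm n u)) (f' := Gm n)
    (fun u _ => Pm_hasDeriv n u) ((Gm_cont n).intervalIntegrable α β)
  rw [h]; ring

lemma Pm_le_exp (n : ℕ) {x : ℝ} (hx : 0 ≤ x) : Pm n x ≤ Real.exp x :=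
  Real.sum_le_exp_of_nonneg hx _

lemma Pm_mono (n : ℕ) {x y : ℝ} (hx : 0 ≤ x) (hxy : x ≤ y) : Pm n x ≤ Pm n y := by
  apply Finset.sum_le_sum
  intro k _
  have : x ^ k ≤ y ^ k := pow_le_pow_left₀ hx hxy k
  gcongr

lemma Pm_nonneg (n : ℕ) {x : ℝ} (hx : 0 ≤ x) : 0 ≤ Pm n x := by
  apply Finset.sum_nonneg; intro k _; positivity

lemma Gm_interval_le (n : ℕ) {α s : ℝ} (hα : 0 ≤ α) (hs : 0 ≤ s) :
    ∫ u in α..(α + s), Gm n u ≤ 1 - Real.exp (-s) := by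
  rw [Gm_integral]
  set β := α + s with hβ
  have hβ0 : 0 ≤ β := by linarith
  have hP : Pm n α ≤ Pm n β := Pm_mono n hα (by linarith)
  have hPe : Pm n α ≤ Real.exp α := Pm_le_exp n hα
  have hPn : 0 ≤ Pm n α := Pm_nonneg n hα
  have hxy : Real.exp (-β) ≤ Real.exp (-α) := Real.exp_le_exp.2 (by linarith)
  have h1 : Real.exp α * Real.exp (-α) = 1 := by rw [← Real.exp_add]; simp
  have h2 : Real.exp α * Real.exp (-β) = Real.exp (-s) := by
    rw [← Real.exp_add]; congr 1; rw [hβ]; ring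
  nlinarith [Real.exp_pos (-β), Real.exp_pos (-α), Real.exp_pos α,
    mul_le_mul_of_nonneg_right hP (Real.exp_pos (-β)).le,
    mul_le_mul_of_nonneg_left hxy hPn,
    mul_le_mul_of_nonneg_right hPe (sub_nonneg.2 hxy)]

lemma Gm_exists_level (n : ℕ) {s : ℝ} (hs : 0 < s) :
    ∃ α t : ℝ, 0 ≤ α ∧ 0 ≤ t ∧
      (∀ u ∈ Set.Ioc α (α + s), t ≤ Gm n u) ∧
      (∀ u, 0 < u → u ∉ Set.Ioc α (α + s) → Gm n u ≤ t) := by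
  rcases Nat.eq_zero_or_pos n with h0 | h0
  · refine ⟨0, Real.exp (-s), le_refl _, (Real.exp_pos _).le, ?_, ?_⟩
    · intro u hu
      subst h0
      simp only [Gm, pow_zero, one_mul, Nat.factorial_zero, Nat.cast_one, div_one]
      exact Real.exp_le_exp.2 (by simpa using hu.2)
    · intro u hu hni
      subst h0
      simp only [Gm, pow_zero, one_mul, Nat.factorial_zero, Nat.cast_one, div_one]
      have : ¬ u ≤ s := fun h => hni ⟨by simpa using hu, by simpa using h⟩
      exact Real.exp_le_exp.2 (by linarith)
  · -- n ≥ 1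
    have hn : (0:ℝ) < n := by exact_mod_cast h0
    set E := Real.exp (s / n) with hE
    have hE1 : 1 < E := by
      rw [hE]; rw [← Real.exp_zero]; exact Real.exp_lt_exp.2 (by positivity)
    set α₀ := s / (E - 1) with hα₀
    have hα₀pos : 0 < α₀ := div_pos hs (by linarith)
    have hEsn : s / n ≤ E - 1 := by
      rw [hE]; linarith [Real.add_one_le_exp (s / n)]
    have hα₀n : α₀ ≤ n := by
      rw [hα₀, div_le_iff₀ (by linarith : (0:ℝ) < E - 1)]
      calc s = (n:ℝ) * (s / n) := by field_simp
        _ ≤ (n:ℝ) * (E - 1) := by gcongr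
    -- the function ψ
    set ψ : ℝ → ℝ := fun x => (n:ℝ) * (Real.log (x + s) - Real.log x) - s with hψ
    have hψcont : ContinuousOn ψ (Set.Icc α₀ (n:ℝ)) := by
      apply ContinuousOn.sub ?_ continuousOn_const
      apply ContinuousOn.mul continuousOn_const
      apply ContinuousOn.sub
      · apply ContinuousOn.log (by fun_prop)
        intro x hx; have := hx.1; nlinarith
      · apply ContinuousOn.log continuousOn_id
        intro x hx h
        simp only [id_eq] at h
        nlinarith [hx.1]
    have hψn : ψ (n:ℝ) ≤ 0 := by
      have hlog : Real.log (((n:ℝ) + s) / n) ≤ ((n:ℝ) + s) / n - 1 :=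
        Real.log_le_sub_one_of_pos (by positivity)
      rw [Real.log_div (by positivity) (by positivity)] at hlog
      have : ((n:ℝ) + s) / n - 1 = s / n := by field_simp; ring
      rw [this] at hlog
      have := mul_le_mul_of_nonneg_left hlog hn.le
      rw [hψ]
      simp only
      rw [mul_div_cancel₀] at this
      · linarith
      · exact hn.ne'
    have hψα₀ : 0 ≤ ψ α₀ := by
      have h1 : E - 1 ≠ 0 := by linarith
      have heq : (α₀ + s) / α₀ = E := by
        rw [hα₀]; field_simp; ring
      have hlog : Real.log (α₀ + s) - Real.log α₀ = s / n := by
        rw [← Real.log_div (by positivity) hα₀pos.ne', heq, hE, Real.log_exp]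
      rw [hψ]
      simp only
      rw [hlog, mul_div_cancel₀ _ hn.ne']
      linarith
    -- IVT
    have hIVT : (0:ℝ) ∈ ψ '' Set.Icc α₀ (n:ℝ) := by
      apply intermediate_value_Icc' hα₀n hψcont
      exact ⟨hψn, hψα₀⟩
    obtain ⟨α, hαmem, hψα⟩ := hIVT
    have hαpos : 0 < α := lt_of_lt_of_le hα₀pos hαmem.1
    have hαn : α ≤ n := hαmem.2
    set β := α + s with hβdef
    have hβpos : 0 < β := by linarith
    -- G n α = G n β
    have hGeq : Gm n α = Gm n β := by
      have hlog : (n:ℝ) * Real.log β = (n:ℝ) * Real.log α + s := by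
        rw [hψ] at hψα; simp only at hψα; linarith [hψα]
      have h1 : Real.log (Gm n α * n.factorial) = Real.log (Gm n β * n.factorial) := by
        have ha : Gm n α * n.factorial = α ^ n * Real.exp (-α) := by
          rw [Gm]; field_simp
        have hb : Gm n β * n.factorial = β ^ n * Real.exp (-β) := by
          rw [Gm]; field_simp
        rw [ha, hb, Real.log_mul (by positivity) (Real.exp_pos _).ne',
          Real.log_mul (by positivity) (Real.exp_pos _).ne',
          Real.log_exp, Real.log_exp, Real.log_pow, Real.log_pow]
        push_cast
        rw [hβdef] at hlog ⊢
        linarith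
      have hfa : (0:ℝ) < Gm n α * n.factorial := by
        have : (0:ℝ) < α ^ n * Real.exp (-α) := by positivity
        rw [Gm]; rw [div_mul_cancel₀]
        · exact this
        · positivity
      have hfb : (0:ℝ) < Gm n β * n.factorial := by
        have : (0:ℝ) < β ^ n * Real.exp (-β) := by positivity
        rw [Gm]; rw [div_mul_cancel₀]
        · exact this
        · positivity
      have := Real.log_injOn_pos (Set.mem_Ioi.2 hfa) (Set.mem_Ioi.2 hfb) h1
      have hfac : (0:ℝ) < n.factorial := by positivity
      exact mul_right_cancel₀ hfac.ne' this
    -- β ≥ n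
    have hβn : (n:ℝ) ≤ β := by
      by_contra hcon
      push_neg at hcon
      have hαβ : α < β := by rw [hβdef]; linarith
      have hlog2 : Real.log (α / β) < α / β - 1 :=
        Real.log_lt_sub_one_of_pos (by positivity) (by
          intro h
          rw [div_eq_one_iff_eq hβpos.ne'] at h
          linarith)
      rw [Real.log_div hαpos.ne' hβpos.ne'] at hlog2
      have hlog : (n:ℝ) * (Real.log β - Real.log α) = s := by
        rw [hψ] at hψα; simp only at hψα; rw [hβdef] at *; linarith
      have hd : α / β - 1 = -((β - α) / β) := by field_simp; ring
      have h5 : (β - α) / β < Real.log β - Real.log α := by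
        rw [hd] at hlog2; linarith
      have h6 : (n:ℝ) * ((β - α) / β) < s := by
        calc (n:ℝ) * ((β - α) / β) < (n:ℝ) * (Real.log β - Real.log α) := by
              apply mul_lt_mul_of_pos_left h5 hn
          _ = s := hlog
      have h7 : β - α ≤ (n:ℝ) * ((β - α) / β) := by
        rw [mul_div_assoc']
        rw [le_div_iff₀ hβpos]
        nlinarith
      have h8 : β - α = s := by rw [hβdef]; ring
      linarith [h7, h6, h8]
    refine ⟨α, Gm n α, hαpos.le, Gm_nonneg n hαpos.le, ?_, ?_⟩
    · intro u hu
      rcases le_or_gt u (n:ℝ) with h | h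
      · exact Gm_mono_incr n hαpos.le hu.1.le h
      · rw [hGeq]
        exact Gm_mono_decr n h.le hu.2
    · intro u hu hni
      rcases le_or_gt u α with h | h
      · exact Gm_mono_incr n hu.le h hαn
      · have : ¬ u ≤ α + s := fun hle => hni ⟨h, hle⟩
        push_neg at this
        rw [hGeq]
        exact Gm_mono_decr n hβn this.le

lemma sq_image_Ioi : (fun x : ℝ => Real.pi * x ^ 2) '' Set.Ioi 0 = Set.Ioi 0 := by
  ext u
  constructor
  · rintro ⟨x, hx, rfl⟩
    have : 0 < x := hx
    exact mul_pos Real.pi_pos (by positivity)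
  · intro hu
    refine ⟨Real.sqrt (u / Real.pi), ?_, ?_⟩
    · exact Real.sqrt_pos.2 (div_pos hu Real.pi_pos)
    · show Real.pi * Real.sqrt (u / Real.pi) ^ 2 = u
      rw [Real.sq_sqrt (le_of_lt (div_pos hu Real.pi_pos))]
      field_simp

lemma integral_radial_H (h : ℝ → ℝ) (hcont : Continuous h) :
    ∫ z : ℂ, h (Real.pi * ‖z‖ ^ 2) = ∫ u in Set.Ioi (0:ℝ), h u := by
  have hrad := MeasureTheory.integral_fun_norm_addHaar (volume : Measure ℂ)
    (fun r : ℝ => h (Real.pi * r ^ 2))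
  rw [Complex.finrank_real_complex] at hrad
  have hball : ((volume (Metric.ball (0:ℂ) 1)).toReal) = Real.pi := by
    rw [Complex.volume_ball]
    simp
  rw [measureReal_def, hball] at hrad
  have hcov : ∫ u in Set.Ioi (0:ℝ), h u
      = ∫ x in Set.Ioi (0:ℝ), |Real.pi * (2 * x)| • h (Real.pi * x ^ 2) := by
    conv_lhs => rw [← sq_image_Ioi]
    apply integral_image_eq_integral_abs_deriv_smul measurableSet_Ioi
    · intro x _
      have : HasDerivAt (fun x : ℝ => Real.pi * x ^ 2) (Real.pi * (2 * x)) x := by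
        simpa using ((hasDerivAt_pow 2 x).const_mul Real.pi)
      exact this.hasDerivWithinAt
    · intro x hx y hy hxy
      have hx0 : 0 < x := hx
      have hy0 : 0 < y := hy
      field_simp at hxy
      exact (pow_left_inj₀ hx0.le hy0.le two_ne_zero).1 hxy
  rw [hrad, hcov]
  have h1 : (2:ℕ) • Real.pi • ∫ y in Set.Ioi (0:ℝ), y ^ (2 - 1) • h (Real.pi * y ^ 2)
      = ∫ y in Set.Ioi (0:ℝ), ((2:ℝ) * Real.pi * y) • h (Real.pi * y ^ 2) := by
    rw [← integral_smul, nsmul_eq_mul, ← MeasureTheory.integral_const_mul]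
    apply setIntegral_congr_fun measurableSet_Ioi
    intro y _
    simp only [smul_eq_mul, pow_one]
    push_cast
    ring
  rw [h1]
  apply setIntegral_congr_fun measurableSet_Ioi
  intro y hy
  have hy0 : (0:ℝ) < y := hy
  simp only [smul_eq_mul]
  rw [abs_of_pos (by positivity)]
  ring

lemma centered_concentration (n : ℕ) (Ω : Set ℂ) (hmeas : MeasurableSet Ω)
    (hfin : volume Ω ≠ ⊤) :
    (Real.pi ^ n / (n.factorial : ℝ)) *
        ∫ z in Ω, ‖z‖ ^ (2 * n) * Real.exp (-Real.pi * ‖z‖ ^ 2)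
      ≤ 1 - Real.exp (-(volume Ω).toReal) := by
  by_cases hzero : volume Ω = 0
  · rw [hzero]
    rw [Measure.restrict_eq_zero.2 hzero]
    simp
  · set s := (volume Ω).toReal with hsdef
    have hs : 0 < s := ENNReal.toReal_pos hzero hfin
    obtain ⟨α, t, hα, ht, hin, hout⟩ := Gm_exists_level n hs
    set β := α + s with hβdef
    have hβpos : 0 < β := by linarith
    have hGrep : ∀ z : ℂ, (Real.pi ^ n / (n.factorial : ℝ)) *
        (‖z‖ ^ (2 * n) * Real.exp (-Real.pi * ‖z‖ ^ 2)) = Gm n (Real.pi * ‖z‖ ^ 2) := by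
      intro z
      rw [Gm, mul_pow, pow_mul, neg_mul]
      ring
    have hLHS : (Real.pi ^ n / (n.factorial : ℝ)) *
        ∫ z in Ω, ‖z‖ ^ (2 * n) * Real.exp (-Real.pi * ‖z‖ ^ 2)
        = ∫ z in Ω, Gm n (Real.pi * ‖z‖ ^ 2) := by
      rw [← MeasureTheory.integral_const_mul]
      exact setIntegral_congr_fun hmeas fun z _ => hGrep z
    rw [hLHS]
    -- continuity and integrability
    have contG : Continuous fun z : ℂ => Gm n (Real.pi * ‖z‖ ^ 2) := by
      apply (Gm_cont n).comp
      fun_prop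
    have intG : IntegrableOn (fun z : ℂ => Gm n (Real.pi * ‖z‖ ^ 2)) Ω := by
      apply Measure.integrableOn_of_bounded hfin contG.aestronglyMeasurable (M := 1)
      filter_upwards with z
      rw [Real.norm_eq_abs, abs_of_nonneg (Gm_nonneg n (by positivity))]
      exact Gm_le_one n (by positivity)
    set Hc : ℂ → ℝ := fun z => max (Gm n (Real.pi * ‖z‖ ^ 2) - t) 0 with hHc
    have contH : Continuous Hc := (contG.sub continuous_const).max continuous_const
    have suppH : HasCompactSupport Hc := by
      apply HasCompactSupport.intro (K := Metric.closedBall 0 (Real.sqrt (β / Real.pi)))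
        (isCompact_closedBall _ _)
      intro z hz
      rw [Metric.mem_closedBall, not_le, dist_zero_right] at hz
      have hR : Real.sqrt (β / Real.pi) ^ 2 = β / Real.pi :=
        Real.sq_sqrt (le_of_lt (div_pos hβpos Real.pi_pos))
      have hz2 : β < Real.pi * ‖z‖ ^ 2 := by
        have h1 : Real.sqrt (β / Real.pi) ^ 2 < ‖z‖ ^ 2 := by
          apply pow_lt_pow_left₀ hz (Real.sqrt_nonneg _)
          norm_num
        rw [hR] at h1
        rw [div_lt_iff₀ Real.pi_pos] at h1
        linarith [h1]
      have hu : Real.pi * ‖z‖ ^ 2 ∉ Set.Ioc α β := fun hmem => absurd hmem.2 (not_le.2 hz2)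
      have := hout _ (by linarith : (0:ℝ) < Real.pi * ‖z‖ ^ 2) hu
      rw [hHc]
      simp only [max_eq_right (sub_nonpos.2 this)]
    have intH : Integrable Hc := contH.integrable_of_hasCompactSupport suppH
    have intConst : IntegrableOn (fun _ : ℂ => t) Ω :=
      integrableOn_const hfin
    -- main chain
    have step1 : ∫ z in Ω, Gm n (Real.pi * ‖z‖ ^ 2) ≤ ∫ z in Ω, (t + Hc z) := by
      apply setIntegral_mono_on intG (intConst.add intH.integrableOn) hmeas
      intro z _
      have h1 : Gm n (Real.pi * ‖z‖ ^ 2) - t ≤ Hc z := le_max_left _ _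
      simp only [Pi.add_apply]
      linarith
    have step2 : ∫ z in Ω, (t + Hc z) = t * s + ∫ z in Ω, Hc z := by
      rw [integral_add intConst intH.integrableOn, setIntegral_const, smul_eq_mul, measureReal_def, ← hsdef]
      ring
    have step3 : ∫ z in Ω, Hc z ≤ ∫ z : ℂ, Hc z := by
      apply setIntegral_le_integral intH
      filter_upwards with z
      exact le_max_right _ _
    have step4 : ∫ z : ℂ, Hc z = ∫ u in α..β, (Gm n u - t) := by
      rw [hHc]
      rw [integral_radial_H (fun u => max (Gm n u - t) 0)
        (((Gm_cont n).sub continuous_const).max continuous_const)]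
      have hcong : ∫ u in Set.Ioi (0:ℝ), max (Gm n u - t) 0
          = ∫ u in Set.Ioi (0:ℝ), Set.indicator (Set.Ioc α β) (fun u => Gm n u - t) u := by
        apply setIntegral_congr_fun measurableSet_Ioi
        intro u hu
        by_cases hmem : u ∈ Set.Ioc α β
        · rw [Set.indicator_of_mem hmem]
          exact max_eq_left (sub_nonneg.2 (hin u hmem))
        · rw [Set.indicator_of_notMem hmem]
          exact max_eq_right (sub_nonpos.2 (hout u hu hmem))
      rw [hcong, setIntegral_indicator measurableSet_Ioc]
      have hsub : Set.Ioc α β ⊆ Set.Ioi (0:ℝ) := fun u hu => lt_of_le_of_lt hα hu.1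
      rw [Set.inter_eq_self_of_subset_right hsub]
      rw [intervalIntegral.integral_of_le (by linarith : α ≤ β)]
    have step5 : ∫ u in α..β, (Gm n u - t) = (∫ u in α..β, Gm n u) - s * t := by
      rw [intervalIntegral.integral_sub ((Gm_cont n).intervalIntegrable α β)
        (intervalIntegrable_const), intervalIntegral.integral_const, smul_eq_mul, hβdef]
      ring
    have step6 : ∫ u in α..β, Gm n u ≤ 1 - Real.exp (-s) := Gm_interval_le n hα hs.le
    calc ∫ z in Ω, Gm n (Real.pi * ‖z‖ ^ 2) ≤ t * s + ∫ z in Ω, Hc z := by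
          rw [← step2]; exact step1
      _ ≤ t * s + ∫ z : ℂ, Hc z := by linarith
      _ = t * s + ((∫ u in α..β, Gm n u) - s * t) := by rw [step4, step5]
      _ = ∫ u in α..β, Gm n u := by ring
      _ ≤ 1 - Real.exp (-s) := step6

/-- For every measurable `Ω ⊆ ℂ` of finite Lebesgue measure, every `n ∈ ℕ` and `a ∈ ℂ`,
`(πⁿ/n!) ∫_Ω |z−a|^{2n} e^{−π|z−a|²} dA(z) ≤ 1 − e^{−|Ω|}`; that is,
`∫_Ω |T_a(e_n)|² dλ ≤ 1 − e^{−|Ω|}` for the translated normalized monomials. -/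
theorem translated_monomial_concentration
    (Ω : Set ℂ) (hmeas : MeasurableSet Ω) (hfin : volume Ω ≠ ⊤)
    (n : ℕ) (a : ℂ) :
    (Real.pi ^ n / (n.factorial : ℝ)) *
        ∫ z in Ω, ‖z - a‖ ^ (2 * n) * Real.exp (-Real.pi * ‖z - a‖ ^ 2)
      ≤ 1 - Real.exp (-(volume Ω).toReal) := by
  set Ω' : Set ℂ := (fun z => z + a) ⁻¹' Ω with hΩ'
  have hmeas' : MeasurableSet Ω' := hmeas.preimage (measurable_id.add_const a)
  have hvol' : volume Ω' = volume Ω := measure_preimage_add_right volume a Ω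
  have htrans : ∫ z in Ω, ‖z - a‖ ^ (2 * n) * Real.exp (-Real.pi * ‖z - a‖ ^ 2)
      = ∫ z in Ω', ‖z‖ ^ (2 * n) * Real.exp (-Real.pi * ‖z‖ ^ 2) := by
    set F : ℂ → ℝ := fun z => ‖z‖ ^ (2 * n) * Real.exp (-Real.pi * ‖z‖ ^ 2) with hF
    calc ∫ z in Ω, F (z - a) = ∫ z, Ω.indicator (fun w => F (w - a)) z :=
          (integral_indicator hmeas).symm
      _ = ∫ z, Ω.indicator (fun w => F (w - a)) (z + a) :=
          (integral_add_right_eq_self (fun z => Ω.indicator (fun w => F (w - a)) z) a).symm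
      _ = ∫ z, Ω'.indicator F z := by
          congr 1
          funext z
          by_cases hz : z + a ∈ Ω
          · rw [Set.indicator_of_mem hz, Set.indicator_of_mem (by exact hz : z ∈ Ω')]
            simp
          · rw [Set.indicator_of_notMem hz, Set.indicator_of_notMem (by exact hz : z ∉ Ω')]
      _ = ∫ z in Ω', F z := integral_indicator hmeas'
  rw [htrans, ← hvol']
  exact centered_concentration n Ω' hmeas' (hvol' ▸ hfin)
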